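/- Let μ be a nontrivial symmetric weakly stable probability measure on ℝ, let λ be μ-weakly infinitely divisible, let {λ^r : r ≥ 0} be a convolution semigroup family for (μ,λ), and let t_n ↘ 0. Then for every a > 0, limsup_{n→∞} t_n^{−1} λ^{t_n}({s : |s| > a}) < ∞. -/

import Mathlib

open MeasureTheory Filter Topology ENNReal BoundedContinuousFunction

noncomputable section

/-- `T_c μ`: pushforward of `μ` under `x ↦ c * x`. -/
def rescale (c : ℝ) (μ : Measure ℝ) : Measure ℝ := μ.map (fun x => c * x)

/-- Scale mixture `μ ∘ ν`: pushforward of `μ × ν` under `(x, s) ↦ x * s`. -/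
def mix (μ ν : Measure ℝ) : Measure ℝ := (μ.prod ν).map (fun p => p.1 * p.2)

/-- Convolution of two measures on `ℝ`. -/
def mconv (μ ν : Measure ℝ) : Measure ℝ := (μ.prod ν).map (fun p => p.1 + p.2)

/-- `n`-fold convolution power, with the convention that the 0th power is `δ_0`. -/
def convPow (μ : Measure ℝ) : ℕ → Measure ℝ
  | 0 => Measure.dirac 0
  | n + 1 => mconv (convPow μ n) μ

/-- A probability measure `μ` on `ℝ` is weakly stable if for all `a b : ℝ` there is a
probability measure `lam` with `(T_a μ) ∗ (T_b μ) = μ ∘ lam`. -/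
def WeaklyStable (μ : Measure ℝ) : Prop :=
  ∀ a b : ℝ, ∃ lam : Measure ℝ, IsProbabilityMeasure lam ∧
    mconv (rescale a μ) (rescale b μ) = mix μ lam

/-- `μ` is nontrivial: it has no atoms. -/
def NontrivialMeasure (μ : Measure ℝ) : Prop := ∀ x : ℝ, μ {x} = 0

/-- `μ` is symmetric: `T_{-1} μ = μ`. -/
def SymmetricMeasure (μ : Measure ℝ) : Prop := rescale (-1) μ = μ

/-- `lam` is `μ`-weakly infinitely divisible: for every `n ≥ 1` there is a probability
measure `ν` concentrated on `[0, ∞)` with `(μ ∘ ν)^{∗ n} = μ ∘ lam`. -/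
def MuWeaklyInfDiv (μ lam : Measure ℝ) : Prop :=
  ∀ n : ℕ, 1 ≤ n → ∃ ν : Measure ℝ, IsProbabilityMeasure ν ∧ ν (Set.Iio 0) = 0 ∧
    convPow (mix μ ν) n = mix μ lam

/-- Characteristic function of a measure on `ℝ`. -/
def charFun' (μ : Measure ℝ) (t : ℝ) : ℂ := ∫ x, Complex.exp (t * x * Complex.I) ∂μ

/-- Weak convergence of a sequence of measures on `ℝ`. -/
def WeakTendsto (μs : ℕ → Measure ℝ) (μ : Measure ℝ) : Prop :=
  ∀ f : ℝ →ᵇ ℝ, Tendsto (fun n => ∫ x, f x ∂(μs n)) atTop (𝓝 (∫ x, f x ∂μ))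

/-- A convolution semigroup family for `(μ, lam)`. -/
def ConvSemigroupFamily (μ lam : Measure ℝ) (L : ℝ → Measure ℝ) : Prop :=
  (∀ r : ℝ, 0 ≤ r → IsProbabilityMeasure (L r)) ∧
  L 0 = Measure.dirac 0 ∧ L 1 = lam ∧
  (∀ r s : ℝ, 0 ≤ r → 0 ≤ s → mconv (mix μ (L r)) (mix μ (L s)) = mix μ (L (r + s))) ∧
  (∀ f : ℝ →ᵇ ℝ, Tendsto (fun r => ∫ x, f x ∂(L r)) (𝓝[>] (0 : ℝ)) (𝓝 (f 0)))

/-- `C_#`: bounded continuous functions vanishing on a neighborhood of `0`. -/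
def CSharp (f : ℝ →ᵇ ℝ) : Prop := ∃ ε > (0 : ℝ), ∀ x : ℝ, |x| < ε → f x = 0

/-- `κ(μ) = sup {p ∈ [0,2] : ∫ |x|^p μ(dx) < ∞}` (with `sup ∅ = 0` in `ℝ`). -/
def kappa (μ : Measure ℝ) : ℝ :=
  sSup {p : ℝ | p ∈ Set.Icc (0 : ℝ) 2 ∧ ∫⁻ x, ENNReal.ofReal (|x| ^ p) ∂μ < ∞}

namespace S11

/-- real "cosine transform" -/
def cf (ν : Measure ℝ) (u : ℝ) : ℝ := ∫ x, Real.cos (u * x) ∂ν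

lemma integrable_bdd {α : Type*} [MeasurableSpace α] {ν : Measure α} [IsFiniteMeasure ν]
    {f : α → ℝ} (C : ℝ)
    (hm : Measurable f) (hb : ∀ x, |f x| ≤ C) : Integrable f ν :=
  (integrable_const C).mono' hm.aestronglyMeasurable (Eventually.of_forall fun x => by
    simpa [Real.norm_eq_abs] using hb x)

lemma integrable_cos {ν : Measure ℝ} [IsFiniteMeasure ν] (u : ℝ) :
    Integrable (fun x => Real.cos (u * x)) ν :=
  integrable_bdd 1 (by fun_prop) fun x => Real.abs_cos_le_one _

lemma integrable_sin {ν : Measure ℝ} [IsFiniteMeasure ν] (u : ℝ) :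
    Integrable (fun x => Real.sin (u * x)) ν :=
  integrable_bdd 1 (by fun_prop) fun x => Real.abs_sin_le_one _

lemma cf_zero (ν : Measure ℝ) [IsProbabilityMeasure ν] : cf ν 0 = 1 := by
  simp [cf]

lemma abs_cf_le (ν : Measure ℝ) [IsProbabilityMeasure ν] (u : ℝ) : |cf ν u| ≤ 1 := by
  have h := norm_integral_le_integral_norm (μ := ν) (f := fun x => Real.cos (u * x))
  rw [Real.norm_eq_abs] at h
  refine h.trans ?_
  calc ∫ x, ‖Real.cos (u * x)‖ ∂ν ≤ ∫ _x, (1 : ℝ) ∂ν := by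
        refine integral_mono ((integrable_cos u).norm) (integrable_const 1) fun x => ?_
        simpa [Real.norm_eq_abs] using Real.abs_cos_le_one (u * x)
    _ = 1 := by simp

lemma cf_le_one (ν : Measure ℝ) [IsProbabilityMeasure ν] (u : ℝ) : cf ν u ≤ 1 :=
  (le_abs_self _).trans (abs_cf_le ν u)

lemma continuous_cf (ν : Measure ℝ) [IsProbabilityMeasure ν] : Continuous (cf ν) := by
  refine continuous_of_dominated (bound := fun _ => (1 : ℝ))
    (fun u => (by fun_prop : Measurable fun x => Real.cos (u * x)).aestronglyMeasurable)
    (fun u => Eventually.of_forall fun x => by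
      simpa [Real.norm_eq_abs] using Real.abs_cos_le_one (u * x))
    (integrable_const 1)
    (Eventually.of_forall fun x => by fun_prop)

lemma measurable_mul2 : Measurable fun p : ℝ × ℝ => p.1 * p.2 := by fun_prop
lemma measurable_add2 : Measurable fun p : ℝ × ℝ => p.1 + p.2 := by fun_prop

instance isProb_mix (μ ν : Measure ℝ) [IsProbabilityMeasure μ] [IsProbabilityMeasure ν] :
    IsProbabilityMeasure (mix μ ν) :=
  Measure.isProbabilityMeasure_map measurable_mul2.aemeasurable

instance isProb_mconv (μ ν : Measure ℝ) [IsProbabilityMeasure μ] [IsProbabilityMeasure ν] :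
    IsProbabilityMeasure (mconv μ ν) :=
  Measure.isProbabilityMeasure_map measurable_add2.aemeasurable

lemma cf_mix (μ ν : Measure ℝ) [IsProbabilityMeasure μ] [IsProbabilityMeasure ν] (u : ℝ) :
    cf (mix μ ν) u = ∫ s, cf μ (u * s) ∂ν := by
  rw [cf, mix, integral_map measurable_mul2.aemeasurable
    ((by fun_prop : Measurable fun x : ℝ => Real.cos (u * x)).aestronglyMeasurable)]
  rw [integral_prod_symm _ (integrable_bdd 1
    (by fun_prop : Measurable fun p : ℝ × ℝ => Real.cos (u * (p.1 * p.2)))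
    (fun p => Real.abs_cos_le_one _))]
  refine integral_congr_ae (Eventually.of_forall fun s => ?_)
  simp only [cf]
  refine integral_congr_ae (Eventually.of_forall fun x => ?_)
  ring_nf

lemma sin_int_zero {μ : Measure ℝ} [IsProbabilityMeasure μ] (hsym : rescale (-1) μ = μ)
    (c : ℝ) : ∫ x, Real.sin (c * x) ∂μ = 0 := by
  have h : ∫ x, Real.sin (c * x) ∂μ = ∫ x, Real.sin (c * (-1 * x)) ∂μ := by
    conv_lhs => rw [← hsym, rescale, integral_map
      ((by fun_prop : Measurable fun x : ℝ => -1 * x)).aemeasurable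
      ((by fun_prop : Measurable fun x : ℝ => Real.sin (c * x)).aestronglyMeasurable)]
  have h2 : ∀ x : ℝ, Real.sin (c * (-1 * x)) = - Real.sin (c * x) := fun x => by
    rw [show c * (-1 * x) = -(c * x) by ring, Real.sin_neg]
  simp only [h2, integral_neg] at h
  linarith

lemma sin_int_mix_zero {μ : Measure ℝ} [IsProbabilityMeasure μ] (hsym : rescale (-1) μ = μ)
    (ν : Measure ℝ) [IsProbabilityMeasure ν] (c : ℝ) :
    ∫ y, Real.sin (c * y) ∂(mix μ ν) = 0 := by
  rw [mix, integral_map measurable_mul2.aemeasurable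
    ((by fun_prop : Measurable fun x : ℝ => Real.sin (c * x)).aestronglyMeasurable)]
  rw [integral_prod_symm _ (integrable_bdd 1
    (by fun_prop : Measurable fun p : ℝ × ℝ => Real.sin (c * (p.1 * p.2)))
    (fun p => Real.abs_sin_le_one _))]
  have : ∀ s : ℝ, ∫ x, Real.sin (c * (x * s)) ∂μ = 0 := by
    intro s
    have := sin_int_zero hsym (c * s)
    rw [← this]
    refine integral_congr_ae (Eventually.of_forall fun x => ?_)
    ring_nf
  simp [this]

lemma cf_mconv (κ η : Measure ℝ) [IsProbabilityMeasure κ] [IsProbabilityMeasure η]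
    (hκ : ∀ c : ℝ, ∫ y, Real.sin (c * y) ∂κ = 0) (u : ℝ) :
    cf (mconv κ η) u = cf κ u * cf η u := by
  rw [cf, mconv, integral_map measurable_add2.aemeasurable
    ((by fun_prop : Measurable fun x : ℝ => Real.cos (u * x)).aestronglyMeasurable)]
  rw [integral_prod _ (integrable_bdd 1
    (by fun_prop : Measurable fun p : ℝ × ℝ => Real.cos (u * (p.1 + p.2)))
    (fun p => Real.abs_cos_le_one _))]
  have expand : ∀ x y : ℝ, Real.cos (u * ((x, y).1 + (x, y).2))
      = Real.cos (u * x) * Real.cos (u * y) - Real.sin (u * x) * Real.sin (u * y) := by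
    intro x y
    rw [show u * ((x, y).1 + (x, y).2) = u * x + u * y by ring, Real.cos_add]
  simp only [expand]
  have inner : ∀ x : ℝ, ∫ y, (Real.cos (u * x) * Real.cos (u * y)
      - Real.sin (u * x) * Real.sin (u * y)) ∂η
      = Real.cos (u * x) * cf η u - Real.sin (u * x) * (∫ y, Real.sin (u * y) ∂η) := by
    intro x
    rw [integral_sub ((integrable_cos u).const_mul _) ((integrable_sin u).const_mul _),
      integral_const_mul, integral_const_mul]
    rfl
  simp only [inner]
  rw [integral_sub ((integrable_cos u).mul_const _) ((integrable_sin u).mul_const _),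
    integral_mul_const, integral_mul_const, hκ u, cf, cf]
  ring

section Psi

variable {μ : Measure ℝ} [IsProbabilityMeasure μ] {L : ℝ → Measure ℝ}

/-- `ψ r u` -/
def psi (μ : Measure ℝ) (L : ℝ → Measure ℝ) (r u : ℝ) : ℝ := cf (mix μ (L r)) u

lemma psi_mul (hsym : rescale (-1) μ = μ)
    (hprob : ∀ r : ℝ, 0 ≤ r → IsProbabilityMeasure (L r))
    (hsg : ∀ r s : ℝ, 0 ≤ r → 0 ≤ s →
      mconv (mix μ (L r)) (mix μ (L s)) = mix μ (L (r + s)))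
    {r s : ℝ} (hr : 0 ≤ r) (hs : 0 ≤ s) (u : ℝ) :
    psi μ L (r + s) u = psi μ L r u * psi μ L s u := by
  haveI := hprob r hr; haveI := hprob s hs
  rw [psi, ← hsg r s hr hs, cf_mconv _ _ (sin_int_mix_zero hsym (L r))]
  rfl

lemma psi_zero (h0 : L 0 = Measure.dirac 0) (u : ℝ) : psi μ L 0 u = 1 := by
  rw [psi, h0]
  haveI : IsProbabilityMeasure (Measure.dirac (0 : ℝ)) := inferInstance
  rw [cf_mix μ _ u, integral_dirac (fun s => cf μ (u * s)) 0]
  simp [cf]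

lemma psi_pow (hsym : rescale (-1) μ = μ)
    (hprob : ∀ r : ℝ, 0 ≤ r → IsProbabilityMeasure (L r))
    (h0 : L 0 = Measure.dirac 0)
    (hsg : ∀ r s : ℝ, 0 ≤ r → 0 ≤ s →
      mconv (mix μ (L r)) (mix μ (L s)) = mix μ (L (r + s)))
    {x : ℝ} (hx : 0 ≤ x) (u : ℝ) (n : ℕ) :
    psi μ L (n * x) u = (psi μ L x u) ^ n := by
  induction n with
  | zero => simpa using psi_zero h0 u
  | succ n ih =>
      have : ((n : ℝ) + 1) * x = (n : ℝ) * x + x := by ring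
      rw [Nat.cast_add, Nat.cast_one, this,
        psi_mul hsym hprob hsg (by positivity) hx u, ih, pow_succ]

lemma psi_tendsto (hprob : ∀ r : ℝ, 0 ≤ r → IsProbabilityMeasure (L r))
    (hcont : ∀ f : ℝ →ᵇ ℝ, Tendsto (fun r => ∫ x, f x ∂(L r)) (𝓝[>] (0 : ℝ)) (𝓝 (f 0)))
    (u : ℝ) : Tendsto (fun r => psi μ L r u) (𝓝[>] (0 : ℝ)) (𝓝 1) := by
  set f : ℝ →ᵇ ℝ := BoundedContinuousFunction.mkOfBound
    ⟨fun s => cf μ (u * s), (continuous_cf μ).comp (continuous_const.mul continuous_id)⟩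
    2 (by
      intro x y
      have hx := abs_cf_le μ (u * x); have hy := abs_cf_le μ (u * y)
      rw [Real.dist_eq]
      simp only [ContinuousMap.coe_mk]
      calc |cf μ (u * x) - cf μ (u * y)| ≤ |cf μ (u * x)| + |cf μ (u * y)| := abs_sub _ _
        _ ≤ 2 := by linarith) with hf
  have h := hcont f
  have hf0 : f 0 = 1 := by
    show cf μ (u * 0) = 1
    rw [mul_zero]; exact cf_zero μ
  rw [hf0] at h
  refine h.congr' ?_
  filter_upwards [self_mem_nhdsWithin] with r (hr : r ∈ Set.Ioi (0:ℝ))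
  haveI := hprob r (le_of_lt hr)
  rw [psi, cf_mix μ (L r) u]
  rfl

lemma psi_pos (hsym : rescale (-1) μ = μ)
    (hprob : ∀ r : ℝ, 0 ≤ r → IsProbabilityMeasure (L r))
    (h0 : L 0 = Measure.dirac 0)
    (hsg : ∀ r s : ℝ, 0 ≤ r → 0 ≤ s →
      mconv (mix μ (L r)) (mix μ (L s)) = mix μ (L (r + s)))
    (hcont : ∀ f : ℝ →ᵇ ℝ, Tendsto (fun r => ∫ x, f x ∂(L r)) (𝓝[>] (0 : ℝ)) (𝓝 (f 0)))
    (u : ℝ) {r : ℝ} (hr : 0 ≤ r) : 0 < psi μ L r u := by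
  have h := (psi_tendsto (μ := μ) hprob hcont u).eventually
    (eventually_gt_nhds (by norm_num : (1:ℝ)/2 < 1))
  rw [eventually_iff, Metric.mem_nhdsWithin_iff] at h
  obtain ⟨ε, hε, hsub⟩ := h
  rcases eq_or_lt_of_le hr with h0' | hrpos
  · rw [← h0', psi_zero h0]; norm_num
  · set n : ℕ := ⌈r / ε⌉₊ + 1 with hn
    have hnpos : 0 < (n : ℝ) := by positivity
    have hlt : r / n < ε := by
      rw [div_lt_iff₀ hnpos]
      have : r / ε < n := by
        calc r / ε ≤ ⌈r / ε⌉₊ := Nat.le_ceil _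
          _ < n := by exact_mod_cast Nat.lt_succ_self _
      calc r = (r / ε) * ε := by field_simp
        _ < n * ε := by exact mul_lt_mul_of_pos_right this hε
        _ = ε * n := by ring
    have hmem : r / n ∈ Metric.ball (0:ℝ) ε ∩ Set.Ioi 0 := by
      constructor
      · rw [Metric.mem_ball, Real.dist_eq, sub_zero,
          abs_of_pos (div_pos hrpos hnpos)]
        exact hlt
      · exact Set.mem_Ioi.mpr (div_pos hrpos hnpos)
    have hhalf : 1/2 < psi μ L (r / n) u := hsub hmem
    have : psi μ L r u = (psi μ L (r / n) u) ^ n := by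
      rw [← psi_pow hsym hprob h0 hsg (by positivity) u n]
      congr 1
      field_simp
    rw [this]
    exact pow_pos (by linarith) n

lemma psi_le_one (hprob : ∀ r : ℝ, 0 ≤ r → IsProbabilityMeasure (L r))
    {r : ℝ} (hr : 0 ≤ r) (u : ℝ) : psi μ L r u ≤ 1 := by
  haveI := hprob r hr
  exact cf_le_one (mix μ (L r)) u

lemma psi_mono (hsym : rescale (-1) μ = μ)
    (hprob : ∀ r : ℝ, 0 ≤ r → IsProbabilityMeasure (L r))
    (h0 : L 0 = Measure.dirac 0)
    (hsg : ∀ r s : ℝ, 0 ≤ r → 0 ≤ s →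
      mconv (mix μ (L r)) (mix μ (L s)) = mix μ (L (r + s)))
    (hcont : ∀ f : ℝ →ᵇ ℝ, Tendsto (fun r => ∫ x, f x ∂(L r)) (𝓝[>] (0 : ℝ)) (𝓝 (f 0)))
    {r s : ℝ} (hr : 0 ≤ r) (hrs : r ≤ s) (u : ℝ) : psi μ L s u ≤ psi μ L r u := by
  have hd : 0 ≤ s - r := by linarith
  have : psi μ L s u = psi μ L r u * psi μ L (s - r) u := by
    rw [← psi_mul hsym hprob hsg hr hd u]; ring_nf
  rw [this]
  calc psi μ L r u * psi μ L (s - r) u ≤ psi μ L r u * 1 := by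
        refine mul_le_mul_of_nonneg_left (psi_le_one hprob hd u) ?_
        exact le_of_lt (psi_pos hsym hprob h0 hsg hcont u hr)
    _ = psi μ L r u := mul_one _

lemma psi_key (hsym : rescale (-1) μ = μ)
    (hprob : ∀ r : ℝ, 0 ≤ r → IsProbabilityMeasure (L r))
    (h0 : L 0 = Measure.dirac 0)
    (hsg : ∀ r s : ℝ, 0 ≤ r → 0 ≤ s →
      mconv (mix μ (L r)) (mix μ (L s)) = mix μ (L (r + s)))
    (hcont : ∀ f : ℝ →ᵇ ℝ, Tendsto (fun r => ∫ x, f x ∂(L r)) (𝓝[>] (0 : ℝ)) (𝓝 (f 0)))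
    (u : ℝ) {t : ℝ} (ht : 0 < t) (ht1 : t ≤ 1) :
    1 - psi μ L t u ≤ 2 * t * (- Real.log (psi μ L 1 u)) := by
  set m : ℕ := ⌊1 / t⌋₊ with hm
  have hm1 : 1 ≤ m := by
    rw [hm]
    exact Nat.le_floor (by rw [Nat.cast_one, le_div_iff₀ ht]; linarith)
  have hmpos : (0:ℝ) < m := by exact_mod_cast Nat.lt_of_lt_of_le Nat.zero_lt_one hm1
  have hmle : (m : ℝ) ≤ 1 / t := Nat.floor_le (by positivity)
  have htm : t ≤ 1 / m := by
    rw [le_div_iff₀ hmpos]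
    calc t * m ≤ t * (1 / t) := mul_le_mul_of_nonneg_left hmle (le_of_lt ht)
      _ = 1 := by field_simp
  have hm2t : 1 / (m:ℝ) ≤ 2 * t := by
    rcases le_or_gt t (1/2) with hhalf | hhalf
    · have h1 : 1 / t < (m:ℝ) + 1 := Nat.lt_floor_add_one _
      have h2 : 1 / (2*t) ≤ (m:ℝ) := by
        have : 1 / (2*t) ≤ 1 / t - 1 := by
          rw [div_sub' (ne_of_gt ht), div_le_div_iff₀ (by positivity) ht]
          nlinarith
        linarith
      rw [div_le_iff₀ hmpos]
      calc (1:ℝ) = (1 / (2*t)) * (2*t) := by field_simp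
        _ ≤ m * (2*t) := by
          exact mul_le_mul_of_nonneg_right h2 (by positivity)
        _ = 2 * t * m := by ring
    · have : (1:ℝ) ≤ m := by exact_mod_cast hm1
      calc 1 / (m:ℝ) ≤ 1 := by rw [div_le_one hmpos]; exact this
        _ ≤ 2 * t := by linarith
  set c := psi μ L (1/m) u with hc
  have hcpos : 0 < c := psi_pos hsym hprob h0 hsg hcont u (by positivity)
  have hcm : c ^ m = psi μ L 1 u := by
    rw [hc, ← psi_pow hsym hprob h0 hsg (by positivity) u m]
    congr 1
    field_simp
  have hlogc : Real.log (psi μ L 1 u) = m * Real.log c := by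
    rw [← hcm, Real.log_pow]
  have step1 : 1 - psi μ L t u ≤ 1 - c :=
    sub_le_sub_left (psi_mono hsym hprob h0 hsg hcont (le_of_lt ht) htm u) 1
  have step2 : 1 - c ≤ - Real.log c := by
    have := Real.log_le_sub_one_of_pos hcpos
    linarith
  have hlognn : 0 ≤ - Real.log (psi μ L 1 u) := by
    have hle1 := psi_le_one (μ := μ) (L := L) hprob (by norm_num : (0:ℝ) ≤ 1) u
    have := Real.log_nonpos (le_of_lt (psi_pos hsym hprob h0 hsg hcont u (by norm_num))) hle1
    linarith
  have step3 : - Real.log c = (1 / m) * (- Real.log (psi μ L 1 u)) := by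
    rw [hlogc]; field_simp
  calc 1 - psi μ L t u ≤ - Real.log c := le_trans step1 step2
    _ = (1 / m) * (- Real.log (psi μ L 1 u)) := step3
    _ ≤ 2 * t * (- Real.log (psi μ L 1 u)) := mul_le_mul_of_nonneg_right hm2t hlognn

end Psi

lemma cf_neg (ν : Measure ℝ) (v : ℝ) : cf ν (-v) = cf ν v := by
  unfold cf
  refine integral_congr_ae (Eventually.of_forall fun x => ?_)
  show Real.cos (-v * x) = Real.cos (v * x)
  rw [show -v * x = -(v * x) by ring, Real.cos_neg]

/-- averaged sinc kernel -/
def kk (T x : ℝ) : ℝ := if x = 0 then 1 else Real.sin (T * x) / (T * x)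

lemma measurable_kk (T : ℝ) : Measurable (kk T) := by
  unfold kk
  exact Measurable.ite measurableSet_eq measurable_const (by fun_prop)

instance finRestrictIoc (c d : ℝ) :
    IsFiniteMeasure (volume.restrict (Set.Ioc c d)) :=
  ⟨by rw [Measure.restrict_apply_univ]; exact measure_Ioc_lt_top⟩

lemma avg_eq (μ : Measure ℝ) [IsProbabilityMeasure μ] {T : ℝ} (hT : 0 < T) :
    T⁻¹ * ∫ v in (0:ℝ)..T, cf μ v = ∫ x, kk T x ∂μ := by
  have swap : ∫ v in Set.Ioc (0:ℝ) T, (∫ x, Real.cos (v * x) ∂μ)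
      = ∫ x, (∫ v in Set.Ioc (0:ℝ) T, Real.cos (v * x)) ∂μ :=
    integral_integral_swap (f := fun v x => Real.cos (v * x))
      (integrable_bdd 1 (by fun_prop) (fun p => Real.abs_cos_le_one _))
  have inner : ∀ x : ℝ, (∫ v in Set.Ioc (0:ℝ) T, Real.cos (v * x))
      = if x = 0 then T else Real.sin (T * x) / x := by
    intro x
    rw [← intervalIntegral.integral_of_le hT.le]
    by_cases hx : x = 0
    · simp [hx]
    · rw [if_neg hx, intervalIntegral.integral_comp_mul_right Real.cos hx, integral_cos]
      rw [zero_mul, Real.sin_zero, sub_zero, smul_eq_mul, inv_mul_eq_div]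
  calc T⁻¹ * ∫ v in (0:ℝ)..T, cf μ v
      = T⁻¹ * ∫ x, (if x = 0 then T else Real.sin (T * x) / x) ∂μ := by
        rw [intervalIntegral.integral_of_le hT.le]
        rw [show (∫ v in Set.Ioc (0:ℝ) T, cf μ v)
            = ∫ v in Set.Ioc (0:ℝ) T, (∫ x, Real.cos (v * x) ∂μ) from rfl, swap]
        congr 1
        exact integral_congr_ae (Eventually.of_forall fun x => inner x)
    _ = ∫ x, kk T x ∂μ := by
        rw [← integral_const_mul]
        refine integral_congr_ae (Eventually.of_forall fun x => ?_)
        show T⁻¹ * (if x = 0 then T else Real.sin (T * x) / x) = kk T x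
        by_cases hx : x = 0
        · simp [kk, hx, inv_mul_cancel₀ (ne_of_gt hT)]
        · rw [if_neg hx, kk, if_neg hx]
          field_simp
          
lemma kk_tendsto (μ : Measure ℝ) [IsProbabilityMeasure μ] (hnt0 : μ ({0} : Set ℝ) = 0) :
    Tendsto (fun T => ∫ x, kk T x ∂μ) atTop (𝓝 0) := by
  have h0 : (𝓝 (0:ℝ)) = 𝓝 (∫ x, (0:ℝ) ∂μ) := by simp
  rw [h0]
  refine tendsto_integral_filter_of_dominated_convergence (bound := fun _ => (1:ℝ))
    (Eventually.of_forall fun T => (measurable_kk T).aestronglyMeasurable) ?_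
    (integrable_const 1) ?_
  · filter_upwards [eventually_gt_atTop (0:ℝ)] with T hT
    refine Eventually.of_forall fun x => ?_
    rw [Real.norm_eq_abs, kk]
    by_cases hx : x = 0
    · simp [hx]
    · rw [if_neg hx, abs_div]
      have h2 : 0 < |T * x| := abs_pos.mpr (mul_ne_zero (ne_of_gt hT) hx)
      rw [div_le_one h2]
      exact Real.abs_sin_le_abs
  · have hae : ∀ᵐ x ∂μ, x ≠ 0 := by
      rw [ae_iff]
      convert hnt0 using 2
      ext x; simp
    filter_upwards [hae] with x hx
    refine squeeze_zero_norm' (a := fun T => (T * |x|)⁻¹) ?_ ?_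
    · filter_upwards [eventually_gt_atTop (0:ℝ)] with T hT
      rw [kk, if_neg hx, Real.norm_eq_abs, abs_div]
      have h2 : 0 < |T * x| := abs_pos.mpr (mul_ne_zero (ne_of_gt hT) hx)
      have : |T * x| = T * |x| := by
        rw [abs_mul, abs_of_pos hT]
      rw [this] at h2 ⊢
      rw [div_le_iff₀ h2, inv_mul_cancel₀ (ne_of_gt h2)]
      exact Real.abs_sin_le_one _
    · exact tendsto_inv_atTop_zero.comp
        (Tendsto.atTop_mul_const (abs_pos.mpr hx) tendsto_id)

lemma exists_T0 (μ : Measure ℝ) [IsProbabilityMeasure μ] (hnt0 : μ ({0} : Set ℝ) = 0) :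
    ∃ T0 : ℝ, 1 ≤ T0 ∧ ∀ T, T0 ≤ T → T⁻¹ * ∫ v in (0:ℝ)..T, cf μ v ≤ 1/2 := by
  have hev : ∀ᶠ T in atTop, ∫ x, kk T x ∂μ < 1/2 :=
    (kk_tendsto μ hnt0).eventually_lt_const (by norm_num)
  have hev2 : ∀ᶠ T in atTop, T⁻¹ * ∫ v in (0:ℝ)..T, cf μ v ≤ 1/2 := by
    filter_upwards [hev, eventually_gt_atTop (0:ℝ)] with T h1 h2
    rw [avg_eq μ h2]
    linarith
  obtain ⟨T0, hT0⟩ := eventually_atTop.mp hev2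
  exact ⟨max T0 1, le_max_right _ _, fun T hT =>
    hT0 T (le_trans (le_max_left _ _) hT)⟩

end S11

theorem stmt11 (μ lam : Measure ℝ)
    (hμ : IsProbabilityMeasure μ) (hnt : NontrivialMeasure μ)
    (hsym : SymmetricMeasure μ) (hws : WeaklyStable μ)
    (hlam : IsProbabilityMeasure lam) (hdiv : MuWeaklyInfDiv μ lam)
    (L : ℝ → Measure ℝ) (hL : ConvSemigroupFamily μ lam L)
    (t : ℕ → ℝ) (htpos : ∀ n, 0 < t n) (htanti : StrictAnti t)
    (ht0 : Tendsto t atTop (𝓝 0)) :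
    ∀ a : ℝ, 0 < a →
      atTop.limsup (fun n => (L (t n)) {s : ℝ | a < |s|} / ENNReal.ofReal (t n)) < ∞ := by
  intro a ha
  haveI := hμ
  obtain ⟨hprob, h0, h1, hsg, hcont⟩ := hL
  have hnt0 : μ ({0} : Set ℝ) = 0 := hnt 0
  obtain ⟨T0, hT01, hT0⟩ := S11.exists_T0 μ hnt0
  set b : ℝ := T0 / a with hb
  have hbpos : 0 < b := div_pos (by linarith) ha
  set A : Set ℝ := {s : ℝ | a < |s|} with hA
  have hAmeas : MeasurableSet A := (isOpen_lt continuous_const continuous_abs).measurableSet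
  -- lower bound on the averaged integrand for |s| > a
  have hJ : ∀ s : ℝ, a < |s| →
      (1:ℝ)/2 ≤ b⁻¹ * ∫ u in (0:ℝ)..b, (1 - S11.cf μ (u * s)) := by
    intro s hs
    have hsne : s ≠ 0 := by
      intro h; rw [h, abs_zero] at hs; linarith
    have habs : 0 < |s| := abs_pos.mpr hsne
    have heven : ∀ u : ℝ, S11.cf μ (u * s) = S11.cf μ (u * |s|) := by
      intro u
      rcases abs_choice s with h | h
      · rw [h]
      · rw [h, show u * -s = -(u * s) by ring, S11.cf_neg]
    have hcfc : Continuous fun u : ℝ => S11.cf μ (u * |s|) :=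
      (S11.continuous_cf μ).comp (continuous_id.mul continuous_const)
    have hint : ∫ u in (0:ℝ)..b, (1 - S11.cf μ (u * s))
        = b - ∫ u in (0:ℝ)..b, S11.cf μ (u * |s|) := by
      rw [intervalIntegral.integral_congr
        (g := fun u => 1 - S11.cf μ (u * |s|)) (fun u _ => by rw [heven u]),
        intervalIntegral.integral_sub (intervalIntegrable_const)
          (hcfc.intervalIntegrable 0 b)]
      congr 1
      simp
    have hsub : ∫ u in (0:ℝ)..b, S11.cf μ (u * |s|)
        = |s|⁻¹ * ∫ v in (0:ℝ)..(b * |s|), S11.cf μ v := by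
      rw [intervalIntegral.integral_comp_mul_right (S11.cf μ) (ne_of_gt habs), zero_mul,
        smul_eq_mul]
    have hbs : T0 ≤ b * |s| := by
      have h1' : b * a = T0 := by
        rw [hb]; field_simp
      nlinarith
    have hbspos : 0 < b * |s| := mul_pos hbpos habs
    have hG := hT0 (b * |s|) hbs
    have heq : b⁻¹ * ∫ u in (0:ℝ)..b, (1 - S11.cf μ (u * s))
        = 1 - (b * |s|)⁻¹ * ∫ v in (0:ℝ)..(b * |s|), S11.cf μ v := by
      rw [hint, hsub, mul_sub, inv_mul_cancel₀ (ne_of_gt hbpos), mul_inv, ← mul_assoc]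
    rw [heq]
    linarith
  -- the uniform bound
  haveI := hprob 1 (by norm_num)
  have psi1pos : ∀ u : ℝ, 0 < S11.psi μ L 1 u := fun u =>
    S11.psi_pos hsym hprob h0 hsg hcont u (by norm_num)
  have psi1cont : Continuous fun u : ℝ => S11.psi μ L 1 u :=
    S11.continuous_cf (mix μ (L 1))
  set J : ℝ := ∫ u in Set.Ioc (0:ℝ) b, (- Real.log (S11.psi μ L 1 u)) with hJdef
  set M : ℝ := 4 / b * J with hM
  have key : ∀ tt : ℝ, 0 < tt → tt ≤ 1 → ((L tt) A).toReal ≤ tt * M := by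
    intro tt htt htt1
    haveI := hprob tt htt.le
    set g : ℝ → ℝ := fun s => b⁻¹ * ∫ u in Set.Ioc (0:ℝ) b, (1 - S11.cf μ (u * s)) with hg
    have hgJ : ∀ s ∈ A, (1:ℝ)/2 ≤ g s := by
      intro s hs
      have := hJ s hs
      rwa [intervalIntegral.integral_of_le hbpos.le] at this
    have hgcont : Continuous g := by
      refine continuous_const.mul (continuous_of_dominated (bound := fun _ => (2:ℝ))
        (fun s => ((continuous_const.sub ((S11.continuous_cf μ).comp
          (continuous_id.mul continuous_const))).measurable).aestronglyMeasurable) ?_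
        (integrable_const 2) ?_)
      · intro s
        refine Eventually.of_forall fun u => ?_
        show ‖1 - S11.cf μ (u * s)‖ ≤ 2
        rw [Real.norm_eq_abs]
        have := S11.abs_cf_le μ (u * s)
        rw [abs_le] at this ⊢
        constructor <;> [linarith [this.2]; linarith [this.1]]
      · refine Eventually.of_forall fun u => ?_
        exact continuous_const.sub ((S11.continuous_cf μ).comp
          (continuous_const.mul continuous_id))
    have hgnonneg : ∀ s, 0 ≤ g s := by
      intro s
      refine mul_nonneg (inv_nonneg.mpr hbpos.le) (setIntegral_nonneg measurableSet_Ioc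
        fun u _ => ?_)
      have := S11.cf_le_one μ (u * s)
      linarith
    have hgbd : ∀ s, |g s| ≤ 2 := by
      intro s
      rw [abs_of_nonneg (hgnonneg s)]
      have hle : ∫ u in Set.Ioc (0:ℝ) b, (1 - S11.cf μ (u * s))
          ≤ ∫ _u in Set.Ioc (0:ℝ) b, (2:ℝ) := by
        refine setIntegral_mono_on ?_ ((integrableOn_const_iff (C := (2:ℝ))).mpr (Or.inr ?_))
          measurableSet_Ioc fun u _ => ?_
        · exact (continuous_const.sub ((S11.continuous_cf μ).comp
            (continuous_id.mul continuous_const))).integrableOn_Ioc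
        · rw [Real.volume_Ioc]; exact ENNReal.ofReal_lt_top
        · have := S11.abs_cf_le μ (u * s)
          rw [abs_le] at this
          linarith [this.1]
      have h2b : ∫ _u in Set.Ioc (0:ℝ) b, (2:ℝ) = 2 * b := by
        rw [setIntegral_const, Real.volume_real_Ioc, sub_zero, smul_eq_mul,
          max_eq_left hbpos.le]
        ring
      rw [h2b] at hle
      calc g s ≤ b⁻¹ * (2 * b) := mul_le_mul_of_nonneg_left hle (inv_nonneg.mpr hbpos.le)
        _ = 2 := by field_simp
    have hgint : Integrable g (L tt) := S11.integrable_bdd 2 hgcont.measurable hgbd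
    -- step 1 : (1/2) * measure ≤ ∫ g
    have step1 : (1:ℝ)/2 * ((L tt) A).toReal ≤ ∫ s, g s ∂(L tt) := by
      calc (1:ℝ)/2 * ((L tt) A).toReal ≤ ∫ s in A, g s ∂(L tt) :=
            by have := setIntegral_ge_of_const_le_real hAmeas (measure_ne_top _ _) hgJ hgint.integrableOn
               simpa only [Measure.real, smul_eq_mul] using this
        _ ≤ ∫ s, g s ∂(L tt) :=
            setIntegral_le_integral hgint (Eventually.of_forall hgnonneg)
    -- step 2 : swap integrals
    have step2 : ∫ s, g s ∂(L tt)
        = b⁻¹ * ∫ u in Set.Ioc (0:ℝ) b, (1 - S11.psi μ L tt u) := by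
      rw [hg]
      rw [integral_const_mul]
      congr 1
      have hswap := integral_integral_swap (μ := L tt)
        (ν := volume.restrict (Set.Ioc (0:ℝ) b))
        (f := fun s u => 1 - S11.cf μ (u * s))
        (S11.integrable_bdd 2 (by
          have : Continuous fun p : ℝ × ℝ => 1 - S11.cf μ (p.2 * p.1) :=
            continuous_const.sub ((S11.continuous_cf μ).comp
              (continuous_snd.mul continuous_fst))
          exact this.measurable) (fun p => by
          show |1 - S11.cf μ (p.2 * p.1)| ≤ 2
          have := S11.abs_cf_le μ (p.2 * p.1)
          rw [abs_le] at this ⊢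
          constructor <;> [linarith [this.2]; linarith [this.1]]))
      rw [hswap]
      refine integral_congr_ae (Eventually.of_forall fun u => ?_)
      show ∫ s, (1 - S11.cf μ (u * s)) ∂(L tt) = 1 - S11.psi μ L tt u
      have hint1 : Integrable (fun s : ℝ => S11.cf μ (u * s)) (L tt) :=
        S11.integrable_bdd 1
          (by exact ((S11.continuous_cf μ).comp (continuous_const.mul continuous_id)).measurable)
          (fun s => S11.abs_cf_le μ (u * s))
      rw [integral_sub (integrable_const 1) hint1]
      rw [integral_const]
      simp only [measure_univ, probReal_univ, ENNReal.toReal_one, one_smul]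
      rw [S11.psi, S11.cf_mix μ (L tt) u]
    -- step 3 : pointwise bound and integrate
    have step3 : ∫ u in Set.Ioc (0:ℝ) b, (1 - S11.psi μ L tt u)
        ≤ 2 * tt * J := by
      have hmono : ∫ u in Set.Ioc (0:ℝ) b, (1 - S11.psi μ L tt u)
          ≤ ∫ u in Set.Ioc (0:ℝ) b, 2 * tt * (- Real.log (S11.psi μ L 1 u)) := by
        refine setIntegral_mono_on ?_ ?_ measurableSet_Ioc fun u _ =>
          S11.psi_key hsym hprob h0 hsg hcont u htt htt1
        · exact (continuous_const.sub
            (S11.continuous_cf (mix μ (L tt)))).integrableOn_Ioc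
        · exact (continuous_const.mul
            ((psi1cont.log fun u => (psi1pos u).ne').neg)).integrableOn_Ioc
      rw [integral_const_mul] at hmono
      exact hmono
    -- combine
    have hcomb : (1:ℝ)/2 * ((L tt) A).toReal ≤ b⁻¹ * (2 * tt * J) := by
      refine le_trans step1 ?_
      rw [step2]
      exact mul_le_mul_of_nonneg_left step3 (inv_nonneg.mpr hbpos.le)
    have : ((L tt) A).toReal ≤ 2 * (b⁻¹ * (2 * tt * J)) := by linarith
    calc ((L tt) A).toReal ≤ 2 * (b⁻¹ * (2 * tt * J)) := this
      _ = tt * M := by rw [hM]; field_simp; ring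
  -- conclude
  have hev : ∀ᶠ n in atTop,
      (L (t n)) A / ENNReal.ofReal (t n) ≤ ENNReal.ofReal M := by
    filter_upwards [ht0.eventually_lt_const (by norm_num : (0:ℝ) < 1)] with n hn1
    haveI := hprob (t n) (htpos n).le
    have hkey := key (t n) (htpos n) hn1.le
    rw [ENNReal.div_le_iff (ENNReal.ofReal_pos.mpr (htpos n)).ne' ENNReal.ofReal_ne_top]
    calc (L (t n)) A = ENNReal.ofReal (((L (t n)) A).toReal) :=
          (ENNReal.ofReal_toReal (measure_ne_top _ _)).symm
      _ ≤ ENNReal.ofReal (t n * M) := ENNReal.ofReal_le_ofReal hkey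
      _ = ENNReal.ofReal M * ENNReal.ofReal (t n) := by
          rw [ENNReal.ofReal_mul (htpos n).le, mul_comm]
  exact lt_of_le_of_lt (limsup_le_of_le (by isBoundedDefault) hev) ENNReal.ofReal_lt_top
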